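/- Translation of a single OR gate into binary clauses is correct for unit propagation: let φ be a CNF formula, let w₁,…,w_m be literals and u a positive literal on a fresh variable not occurring in φ, and let ψ = φ ∪ {{¬wᵢ, u} : 1 ≤ i ≤ m}. Then u is derivable from ψ by unit propagation if and only if at least one of w₁,…,w_m is derivable from φ. -/
import Mathlib


/-- A literal is a propositional variable paired with a polarity. -/
abbrev Lit (V : Type*) := V × Bool

/-- The complement of a literal. -/
def Lit.neg {V : Type*} (l : Lit V) : Lit V := (l.1, !l.2)

/-- A clause is a finite set of literals. -/
abbrev Clause (V : Type*) := Finset (Lit V)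

/-- A CNF formula is a finite set of clauses. -/
abbrev CNF (V : Type*) := Finset (Clause V)

/-- A literal is true under a complete assignment. -/
def litTrue {V : Type*} (A : V → Bool) (l : Lit V) : Prop := A l.1 = l.2

/-- A clause is satisfied if some literal in it is true. -/
def satClause {V : Type*} (A : V → Bool) (c : Clause V) : Prop := ∃ l ∈ c, litTrue A l

/-- A CNF formula is satisfied if every clause is satisfied. -/
def satCNF {V : Type*} (A : V → Bool) (φ : CNF V) : Prop := ∀ c ∈ φ, satClause A c

/-- Derivability of a literal by unit propagation: `w` is derivable if some clause
`{l₁,…,l_q,w} ∈ φ` has the complements of all the `lᵢ` derivable. -/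
inductive UPDeriv {V : Type*} (φ : CNF V) : Lit V → Prop
  | step (c : Clause V) (w : Lit V) (hc : c ∈ φ) (hw : w ∈ c)
      (h : ∀ l ∈ c, l ≠ w → UPDeriv φ (Lit.neg l)) : UPDeriv φ w

lemma Lit.neg_neg {V : Type*} (l : Lit V) : Lit.neg (Lit.neg l) = l := by
  simp [Lit.neg]

lemma UPDeriv.mono {V : Type*} {φ ψ : CNF V} (hsub : φ ⊆ ψ) {l : Lit V}
    (hd : UPDeriv φ l) : UPDeriv ψ l := by
  induction hd with
  | step c w hc hw h ih => exact .step c w (hsub hc) hw ih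

lemma not_up_u_false {V : Type*} [DecidableEq V] (φ : CNF V)
    (ws : Finset (Lit V)) (u : V)
    (hfresh : ∀ c ∈ φ, ∀ l ∈ c, l.1 ≠ u) (hws : ∀ w ∈ ws, w.1 ≠ u) :
    ¬ UPDeriv (φ ∪ ws.image (fun w => ({Lit.neg w, ((u, true) : Lit V)} : Clause V)))
      (u, false) := by
  intro h
  cases h with
  | step c w hc hw h =>
    rcases Finset.mem_union.1 hc with h1 | h1
    · exact hfresh c h1 _ hw rfl
    · rcases Finset.mem_image.1 h1 with ⟨w', hw', rfl⟩
      rcases Finset.mem_insert.1 hw with h2 | h2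
      · exact hws w' hw' (by simpa [Lit.neg] using congrArg Prod.fst h2.symm)
      · simp at h2

lemma up_restrict {V : Type*} [DecidableEq V] (φ : CNF V)
    (ws : Finset (Lit V)) (u : V)
    (hfresh : ∀ c ∈ φ, ∀ l ∈ c, l.1 ≠ u) (hws : ∀ w ∈ ws, w.1 ≠ u)
    {l : Lit V}
    (hd : UPDeriv (φ ∪ ws.image (fun w => ({Lit.neg w, ((u, true) : Lit V)} : Clause V))) l) :
    l.1 ≠ u → UPDeriv φ l := by
  induction hd with
  | step c w hc hw h ih =>
    intro hl
    rcases Finset.mem_union.1 hc with h1 | h1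
    · refine .step c w h1 hw (fun l hl' hne => ih l hl' hne ?_)
      have := hfresh c h1 l hl'
      simpa [Lit.neg] using this
    · rcases Finset.mem_image.1 h1 with ⟨w', hw', rfl⟩
      exfalso
      have hmem : ((u, true) : Lit V) ∈ ({Lit.neg w', ((u, true) : Lit V)} : Clause V) := by simp
      have hne : ((u, true) : Lit V) ≠ w := fun e => hl (show w.1 = u by rw [← e])
      have := h _ hmem hne
      exact not_up_u_false φ ws u hfresh hws (by simpa [Lit.neg] using this)

/-- Translation of an OR gate into binary clauses is correct for unit propagation:
with u fresh, u is derivable from φ ∪ {{¬wᵢ,u} : i} iff some wᵢ is derivable from φ. -/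
theorem or_gate_correct {V : Type*} [DecidableEq V] (φ : CNF V)
    (ws : Finset (Lit V)) (u : V)
    (hfresh : ∀ c ∈ φ, ∀ l ∈ c, l.1 ≠ u) (hws : ∀ w ∈ ws, w.1 ≠ u) :
    UPDeriv (φ ∪ ws.image (fun w => ({Lit.neg w, ((u, true) : Lit V)} : Clause V)))
        (u, true) ↔
      ∃ w ∈ ws, UPDeriv φ w := by
  constructor
  · intro h
    cases h with
    | step c w hc hw h =>
      rcases Finset.mem_union.1 hc with h1 | h1
      · exact absurd rfl (hfresh c h1 _ hw)
      · rcases Finset.mem_image.1 h1 with ⟨w', hw', rfl⟩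
        refine ⟨w', hw', ?_⟩
        have hne : Lit.neg w' ≠ ((u, true) : Lit V) := by
          intro e
          exact hws w' hw' (by simpa [Lit.neg] using congrArg Prod.fst e)
        have := h (Lit.neg w') (by simp) hne
        rw [Lit.neg_neg] at this
        exact up_restrict φ ws u hfresh hws this (hws w' hw')
  · rintro ⟨w, hw, hd⟩
    refine .step ({Lit.neg w, ((u, true) : Lit V)} : Clause V) _ ?_ (by simp) ?_
    · exact Finset.mem_union_right _ (Finset.mem_image_of_mem _ hw)
    · intro l hl hne
      rcases Finset.mem_insert.1 hl with rfl | h2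
      · rw [Lit.neg_neg]
        exact hd.mono Finset.subset_union_left
      · exact absurd (Finset.mem_singleton.1 h2) hne
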